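/- For the ICM with three players with capitals A = B = i and C = N - 2i (1 ≤ i < N/2), P^ICM(123) = (C/N)(B/(A+B)) = (1/2)(1 - 2i/N), which coincides exactly with the gambler's ruin probability P^GR_{i,i,N-2i}(123). -/

import Mathlib

/- Three-player fair gambler's ruin with total capital `N`, state `(A, B)` with
player 3 holding `C = N - A - B`.  While all three players are alive (interior
states), a uniformly random pair is chosen and a fair coin flip transfers one
unit (six equally likely transitions).  After one player is eliminated, the
remaining two play fair unit-bet gambler's ruin (the corresponding edge of the
triangle, two equally likely transitions). -/

/-- Discrete harmonicity at interior states (all three capitals `≥ 1`). -/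
def Interior6 (N : ℕ) (p : ℕ → ℕ → ℝ) : Prop :=
  ∀ A B : ℕ, 1 ≤ A → 1 ≤ B → A + B ≤ N - 1 →
    p A B = (p (A - 1) (B + 1) + p (A + 1) (B - 1) + p (A - 1) B + p (A + 1) B
      + p A (B - 1) + p A (B + 1)) / 6

/-- Two-player gambler's ruin recurrence on the edge `A = 0` (players 2, 3). -/
def EdgeA (N : ℕ) (p : ℕ → ℕ → ℝ) : Prop :=
  ∀ B : ℕ, 1 ≤ B → B ≤ N - 1 → p 0 B = (p 0 (B - 1) + p 0 (B + 1)) / 2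

/-- Two-player gambler's ruin recurrence on the edge `B = 0` (players 1, 3). -/
def EdgeB (N : ℕ) (p : ℕ → ℕ → ℝ) : Prop :=
  ∀ A : ℕ, 1 ≤ A → A ≤ N - 1 → p A 0 = (p (A - 1) 0 + p (A + 1) 0) / 2

/-- Two-player gambler's ruin recurrence on the edge `A + B = N` (players 1, 2). -/
def EdgeC (N : ℕ) (p : ℕ → ℕ → ℝ) : Prop :=
  ∀ A : ℕ, 1 ≤ A → A ≤ N - 1 →
    p A (N - A) = (p (A - 1) (N - A + 1) + p (A + 1) (N - A - 1)) / 2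

/-- Vanishing on the open edge `A = 0`. -/
def ZeroA (N : ℕ) (p : ℕ → ℕ → ℝ) : Prop := ∀ B : ℕ, 1 ≤ B → B ≤ N - 1 → p 0 B = 0

/-- Vanishing on the open edge `B = 0`. -/
def ZeroB (N : ℕ) (p : ℕ → ℕ → ℝ) : Prop := ∀ A : ℕ, 1 ≤ A → A ≤ N - 1 → p A 0 = 0

/-- Vanishing on the open edge `A + B = N`. -/
def ZeroC (N : ℕ) (p : ℕ → ℕ → ℝ) : Prop := ∀ A : ℕ, 1 ≤ A → A ≤ N - 1 → p A (N - A) = 0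

/-- `p A B = P_{A,B,N-A-B}(123)`: player 1 eliminated first, then player 2,
player 3 wins all.  Zero on the edges where player 2 or player 3 is eliminated
first, two-player recurrence on the edge `A = 0` ending at `(0,0)` (player 3
holds all `N`) with success, at `(0,N)` (player 2 holds all) with failure. -/
def IsP123 (N : ℕ) (p : ℕ → ℕ → ℝ) : Prop :=
  Interior6 N p ∧ EdgeA N p ∧ ZeroB N p ∧ ZeroC N p ∧
    p 0 0 = 1 ∧ p 0 N = 0 ∧ p N 0 = 0

/-- `p A B = P_{A,B,N-A-B}(132)`: player 1 first, then player 3, player 2 wins. -/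
def IsP132 (N : ℕ) (p : ℕ → ℕ → ℝ) : Prop :=
  Interior6 N p ∧ EdgeA N p ∧ ZeroB N p ∧ ZeroC N p ∧
    p 0 N = 1 ∧ p 0 0 = 0 ∧ p N 0 = 0

/-- `p A B = P_{A,B,N-A-B}(213)`: player 2 first, then player 1, player 3 wins. -/
def IsP213 (N : ℕ) (p : ℕ → ℕ → ℝ) : Prop :=
  Interior6 N p ∧ EdgeB N p ∧ ZeroA N p ∧ ZeroC N p ∧
    p 0 0 = 1 ∧ p N 0 = 0 ∧ p 0 N = 0

/-- `p A B = P_{A,B,N-A-B}(231)`: player 2 first, then player 3, player 1 wins. -/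
def IsP231 (N : ℕ) (p : ℕ → ℕ → ℝ) : Prop :=
  Interior6 N p ∧ EdgeB N p ∧ ZeroA N p ∧ ZeroC N p ∧
    p N 0 = 1 ∧ p 0 0 = 0 ∧ p 0 N = 0

/-- `p A B = P_{A,B,N-A-B}(312)`: player 3 first, then player 1, player 2 wins. -/
def IsP312 (N : ℕ) (p : ℕ → ℕ → ℝ) : Prop :=
  Interior6 N p ∧ EdgeC N p ∧ ZeroA N p ∧ ZeroB N p ∧
    p 0 N = 1 ∧ p N 0 = 0 ∧ p 0 0 = 0

/-- `p A B = P_{A,B,N-A-B}(321)`: player 3 first, then player 2, player 1 wins. -/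
def IsP321 (N : ℕ) (p : ℕ → ℕ → ℝ) : Prop :=
  Interior6 N p ∧ EdgeC N p ∧ ZeroA N p ∧ ZeroB N p ∧
    p N 0 = 1 ∧ p 0 N = 0 ∧ p 0 0 = 0

private lemma edge_linear (N : ℕ) (f : ℕ → ℝ)
    (hrec : ∀ B, 1 ≤ B → B ≤ N - 1 → f B = (f (B - 1) + f (B + 1)) / 2) :
    ∀ B, B ≤ N → f B = f 0 + B * (f 1 - f 0) := by
  intro B
  induction B using Nat.strong_induction_on with
  | _ B ih =>
    intro hB
    match B, hB with
    | 0, _ => simp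
    | 1, _ => push_cast; ring
    | (B+2), hB =>
      have h1 : 1 ≤ B + 1 := by omega
      have h2 : B + 1 ≤ N - 1 := by omega
      have hr := hrec (B+1) h1 h2
      have iB := ih B (by omega) (by omega)
      have iB1 := ih (B+1) (by omega) (by omega)
      simp only [Nat.add_sub_cancel] at hr
      push_cast at iB iB1 ⊢
      linarith

private lemma edge_value (N : ℕ) (hN : 1 ≤ N) (f : ℕ → ℝ)
    (hrec : ∀ B, 1 ≤ B → B ≤ N - 1 → f B = (f (B - 1) + f (B + 1)) / 2)
    (h0 : f 0 = 1) (hNv : f N = 0) :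
    ∀ B, B ≤ N → f B = ((N : ℝ) - B) / N := by
  have hlin := edge_linear N f hrec
  have hNR : (N : ℝ) ≠ 0 := Nat.cast_ne_zero.mpr (by omega)
  have hN' := hlin N le_rfl
  rw [h0, hNv] at hN'
  intro B hB
  have hB2 := hlin B hB
  rw [h0] at hB2
  have hf1 : f 1 - 1 = -(1 / N) := by
    field_simp at hN' ⊢
    linarith
  rw [hB2, hf1]
  field_simp
  ring

private lemma max_principle (N : ℕ) (v : ℕ → ℕ → ℝ)
    (hint : Interior6 N v)
    (hb : ∀ A B : ℕ, 1 ≤ A + B → A + B ≤ N → (A = 0 ∨ B = 0 ∨ A + B = N) → v A B = 0) :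
    ∀ A B : ℕ, 1 ≤ A + B → A + B ≤ N → v A B ≤ 0 := by
  intro A B h1 h2
  set S : Finset (ℕ × ℕ) :=
    (Finset.range (N+1) ×ˢ Finset.range (N+1)).filter
      (fun x => 1 ≤ x.1 + x.2 ∧ x.1 + x.2 ≤ N) with hS
  have hmemS : ∀ a b : ℕ, 1 ≤ a + b → a + b ≤ N → (a, b) ∈ S := by
    intro a b ha hb'
    simp only [hS, Finset.mem_filter, Finset.mem_product, Finset.mem_range]
    exact ⟨⟨by omega, by omega⟩, ha, hb'⟩
  have hSne : S.Nonempty := ⟨(A, B), hmemS A B h1 h2⟩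
  obtain ⟨x₀, hx₀S, hx₀⟩ := S.exists_max_image (fun x => v x.1 x.2) hSne
  set M := v x₀.1 x₀.2 with hM
  have hub : ∀ a b : ℕ, 1 ≤ a + b → a + b ≤ N → v a b ≤ M :=
    fun a b h h' => hx₀ (a, b) (hmemS a b h h')
  set S' := S.filter (fun x => v x.1 x.2 = M) with hS'
  have hS'ne : S'.Nonempty := ⟨x₀, Finset.mem_filter.mpr ⟨hx₀S, rfl⟩⟩
  obtain ⟨y, hyS', hy⟩ := S'.exists_max_image (fun x => x.1 + x.2) hS'ne
  obtain ⟨hyS, hyM⟩ := Finset.mem_filter.mp hyS'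
  have hyR : 1 ≤ y.1 + y.2 ∧ y.1 + y.2 ≤ N := (Finset.mem_filter.mp hyS).2
  have hM0 : M ≤ 0 := by
    by_cases hbd : y.1 = 0 ∨ y.2 = 0 ∨ y.1 + y.2 = N
    · have h0 := hb y.1 y.2 hyR.1 hyR.2 hbd
      rw [← hyM, h0]
    · push_neg at hbd
      obtain ⟨ha, hb2, hc⟩ := hbd
      have ha1 : 1 ≤ y.1 := by omega
      have hb1 : 1 ≤ y.2 := by omega
      have hc1 : y.1 + y.2 ≤ N - 1 := by omega
      have heq := hint y.1 y.2 ha1 hb1 hc1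
      have n1 := hub (y.1 - 1) (y.2 + 1) (by omega) (by omega)
      have n2 := hub (y.1 + 1) (y.2 - 1) (by omega) (by omega)
      have n3 := hub (y.1 - 1) y.2 (by omega) (by omega)
      have n5 := hub y.1 (y.2 - 1) (by omega) (by omega)
      have n6 := hub y.1 (y.2 + 1) (by omega) (by omega)
      rw [hyM] at heq
      have h4 : M ≤ v (y.1 + 1) y.2 := by linarith
      have h4' : v (y.1 + 1) y.2 = M :=
        le_antisymm (hub (y.1 + 1) y.2 (by omega) (by omega)) h4
      have hmem' : (y.1 + 1, y.2) ∈ S' :=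
        Finset.mem_filter.mpr ⟨hmemS _ _ (by omega) (by omega), h4'⟩
      have := hy _ hmem'
      simp only at this
      omega
  exact le_trans (hub A B h1 h2) hM0

/-- For three players with capitals `A = B = i` and `C = N - 2i`
(`1 ≤ i < N/2`), the ICM probability
`P^ICM(123) = (C/N)(B/(A+B)) = (1/2)(1 - 2i/N)` coincides exactly with the
gambler's ruin probability `P^GR_{i,i,N-2i}(123)`. -/
theorem icm_eq_gr_equal_stacks (N i : ℕ) (hi : 1 ≤ i) (hiN : 2 * i < N)
    (p123 : ℕ → ℕ → ℝ) (h123 : IsP123 N p123) :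
    ((N : ℝ) - 2 * i) / N * ((i : ℝ) / (i + i)) = (1 / 2) * (1 - 2 * (i : ℝ) / N) ∧
    p123 i i = ((N : ℝ) - 2 * i) / N * ((i : ℝ) / (i + i)) := by
  obtain ⟨hint, hea, hzb, hzc, h00, h0N, hN0⟩ := h123
  have hNR : (N : ℝ) ≠ 0 := Nat.cast_ne_zero.mpr (by omega)
  have hiR : (i : ℝ) ≠ 0 := Nat.cast_ne_zero.mpr (by omega)
  have hicm : ((N : ℝ) - 2 * i) / N * ((i : ℝ) / (i + i)) = (1 / 2) * (1 - 2 * (i : ℝ) / N) := by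
    field_simp
    ring
  refine ⟨hicm, ?_⟩
  -- value of p123 on the edge A = 0
  have hedge : ∀ B, B ≤ N → p123 0 B = ((N : ℝ) - B) / N :=
    edge_value N (by omega) (fun B => p123 0 B) (fun B h1 h2 => hea B h1 h2) h00 h0N
  -- vanishing on B = 0 including the corner
  have hzb' : ∀ A, 1 ≤ A → A ≤ N → p123 A 0 = 0 := by
    intro A h1 h2
    rcases eq_or_lt_of_le h2 with h | h
    · rw [h]; exact hN0
    · exact hzb A h1 (by omega)
  -- vanishing on A + B = N including corners
  have hzc' : ∀ A, A ≤ N → p123 A (N - A) = 0 := by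
    intro A h2
    rcases Nat.eq_zero_or_pos A with h | h
    · subst h; simpa using h0N
    rcases eq_or_lt_of_le h2 with h' | h'
    · subst h'; simpa using hN0
    · exact hzc A h (by omega)
  -- the symmetric-minus-linear function
  set u : ℕ → ℕ → ℝ := fun A B => p123 A B + p123 B A - ((N : ℝ) - A - B) / N with hu
  have hu_int : Interior6 N u := by
    intro A B hA hB hAB
    have h1 := hint A B hA hB hAB
    have h2 := hint B A hB hA (by omega)
    obtain ⟨a, rfl⟩ : ∃ a, A = a + 1 := ⟨A - 1, by omega⟩
    obtain ⟨b, rfl⟩ : ∃ b, B = b + 1 := ⟨B - 1, by omega⟩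
    simp only [hu, Nat.add_sub_cancel] at *
    push_cast at *
    linear_combination h1 + h2
  have hu_b : ∀ A B : ℕ, 1 ≤ A + B → A + B ≤ N → (A = 0 ∨ B = 0 ∨ A + B = N) → u A B = 0 := by
    intro A B h1 h2 h3
    rcases h3 with h | h | h
    · subst h
      simp only [hu]
      rw [hedge B (by omega), hzb' B (by omega) (by omega)]
      push_cast
      ring
    · subst h
      simp only [hu]
      rw [hedge A (by omega), hzb' A (by omega) (by omega)]
      push_cast
      ring
    · have hB : B = N - A := by omega
      subst hB
      have e1 : p123 A (N - A) = 0 := hzc' A (by omega)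
      have e2 : p123 (N - A) A = 0 := by
        have h' := hzc' (N - A) (by omega)
        have hNA : N - (N - A) = A := by omega
        rwa [hNA] at h'
      simp only [hu]
      rw [e1, e2]
      rw [Nat.cast_sub (show A ≤ N by omega)]
      ring_nf
  have hneg_int : Interior6 N (fun A B => -u A B) := by
    intro A B hA hB hAB
    have := hu_int A B hA hB hAB
    simp only
    linarith
  have hneg_b : ∀ A B : ℕ, 1 ≤ A + B → A + B ≤ N →
      (A = 0 ∨ B = 0 ∨ A + B = N) → (fun A B => -u A B) A B = 0 := by
    intro A B h1 h2 h3
    simp only [hu_b A B h1 h2 h3, neg_zero]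
  have hle := max_principle N u hu_int hu_b i i (by omega) (by omega)
  have hge := max_principle N (fun A B => -u A B) hneg_int hneg_b i i (by omega) (by omega)
  have hu0 : u i i = 0 := le_antisymm hle (by linarith)
  simp only [hu] at hu0
  rw [hicm]
  field_simp at hu0 ⊢
  linarith
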